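/- Let p be an odd prime, let m be a positive power of p, and let A be a nontrivial finite abelian p-group. Suppose the cyclic group C of order 2m acts on A (by automorphisms) in such a way that the unique element of order 2 of C acts by inversion a ↦ a⁻¹. Then the semidirect product A ⋊ C admits a surjective group homomorphism onto the dihedral group of order 2p. -/

import Mathlib

lemma aux_dual (p : ℕ) [Fact p.Prime] (V : Type*) [AddCommGroup V] [Module (ZMod p) V]
    [Nontrivial V] :
    ∃ g : V →+ ZMod p, ∃ v : V, g v ≠ 0 := by
  obtain ⟨v, hv⟩ := exists_ne (0 : V)
  have hdual : ¬ ∀ g : Module.Dual (ZMod p) V, g v = 0 := by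
    rw [Module.forall_dual_apply_eq_zero_iff]
    exact hv
  obtain ⟨g, hg⟩ := not_forall.mp hdual
  exact ⟨g.toAddMonoidHom, v, hg⟩

lemma aux_surj_zmod {p : ℕ} (hp : p.Prime) (Q : Type*) [CommGroup Q] [Finite Q]
    [Nontrivial Q] (hQ : IsPGroup p Q) :
    ∃ π : Q →* Multiplicative (ZMod p), Function.Surjective π := by
  classical
  haveI := Fact.mk hp
  haveI : Fintype Q := Fintype.ofFinite Q
  -- an element of order p
  have hdvd : p ∣ Fintype.card Q := by
    obtain ⟨n, hn⟩ := IsPGroup.iff_card.mp hQ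
    rw [Nat.card_eq_fintype_card] at hn
    have hn0 : n ≠ 0 := by
      rintro rfl
      rw [pow_zero] at hn
      exact Fintype.one_lt_card.ne' hn
    rw [hn]
    exact dvd_pow_self p hn0
  obtain ⟨b, hb⟩ := exists_prime_orderOf_dvd_card p hdvd
  set H : Subgroup Q := (powMonoidHom p : Q →* Q).range with hH
  have hHne : H ≠ ⊤ := by
    intro htop
    have hsurj : Function.Surjective (powMonoidHom p : Q →* Q) :=
      MonoidHom.range_eq_top.mp htop
    have hinj := Finite.injective_iff_surjective.mpr hsurj
    have hb1 : b ≠ 1 := by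
      intro h
      rw [h, orderOf_one] at hb
      exact hp.one_lt.ne' hb.symm
    apply hb1
    apply hinj
    show b ^ p = (1 : Q) ^ p
    rw [one_pow, ← hb, pow_orderOf_eq_one]
  haveI : Nontrivial (Q ⧸ H) := by
    obtain ⟨q, hq⟩ : ∃ q : Q, q ∉ H := by
      by_contra h
      push_neg at h
      exact hHne ((Subgroup.eq_top_iff' H).mpr h)
    exact ⟨⟨(q : Q ⧸ H), 1, fun h => hq ((QuotientGroup.eq_one_iff q).mp h)⟩⟩
  have hpow : ∀ x : Q ⧸ H, x ^ p = 1 := by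
    intro x
    induction x using QuotientGroup.induction_on with
    | _ q =>
      rw [← QuotientGroup.mk_pow, QuotientGroup.eq_one_iff]
      exact ⟨q, rfl⟩
  have hsmul : ∀ x : Additive (Q ⧸ H), p • x = 0 := fun x => hpow x.toMul
  letI : Module (ZMod p) (Additive (Q ⧸ H)) := AddCommGroup.zmodModule hsmul
  obtain ⟨g, v, hgv⟩ := aux_dual p (Additive (Q ⧸ H))
  let π₁ : (Q ⧸ H) →* Multiplicative (ZMod p) := AddMonoidHom.toMultiplicativeRight g
  let π : Q →* Multiplicative (ZMod p) := π₁.comp (QuotientGroup.mk' H)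
  refine ⟨π, ?_⟩
  haveI : Fact (Nat.card (Multiplicative (ZMod p))).Prime := ⟨by
    have h1 : Nat.card (Multiplicative (ZMod p)) = p := by
      exact (Nat.card_congr (Equiv.refl (ZMod p) : Multiplicative (ZMod p) ≃ ZMod p)).trans (Nat.card_zmod p)
    rw [h1]; exact hp⟩
  have hrange : π.range ≠ ⊥ := by
    intro hbot
    obtain ⟨q, hq⟩ := QuotientGroup.mk'_surjective H v.toMul
    have : π q = 1 := by
      rw [Subgroup.eq_bot_iff_forall] at hbot
      exact hbot _ ⟨q, rfl⟩
    apply hgv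
    have : Multiplicative.ofAdd (g (Additive.ofMul (QuotientGroup.mk' H q))) = 1 := this
    rw [hq] at this
    simpa using this
  rcases π.range.eq_bot_or_eq_top_of_prime_card with h | h
  · exact absurd h hrange
  · exact MonoidHom.range_eq_top.mp h

theorem semidirect_surjects_onto_dihedral (p m : ℕ) (hp : p.Prime) (hodd : Odd p)
    (hm : ∃ t : ℕ, 1 ≤ t ∧ m = p ^ t)
    (A : Type*) [CommGroup A] [Finite A] [Nontrivial A] (hA : IsPGroup p A)
    (φ : Multiplicative (ZMod (2 * m)) →* MulAut A)
    (hφ : φ (Multiplicative.ofAdd (m : ZMod (2 * m))) = MulEquiv.inv A) :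
    ∃ f : A ⋊[φ] Multiplicative (ZMod (2 * m)) →* DihedralGroup p,
      Function.Surjective f := by
  classical
  obtain ⟨t, ht1, htm⟩ := hm
  haveI := Fact.mk hp
  have hoddm : Odd m := htm ▸ hodd.pow
  have hm0 : 0 < m := htm ▸ pow_pos hp.pos t
  haveI : NeZero (2 * m) := ⟨by omega⟩
  set σ : MulAut A := φ (Multiplicative.ofAdd (2 : ZMod (2 * m))) with hσ
  -- `σ` has p-power order
  have hofAdd2m : (Multiplicative.ofAdd (2 : ZMod (2 * m))) ^ m = 1 := by
    rw [← ofAdd_nsmul]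
    have h0 : (m • (2 : ZMod (2 * m))) = 0 := by
      have h1 : ((2 * m : ℕ) : ZMod (2 * m)) = 0 := ZMod.natCast_self _
      rw [nsmul_eq_mul]
      push_cast at h1 ⊢
      linear_combination h1
    rw [h0, ofAdd_zero]
  have hσm : σ ^ m = 1 := by
    rw [hσ, ← map_pow, hofAdd2m, map_one]
  have hσpt : σ ^ (p ^ t) = 1 := by rw [← htm]; exact hσm
  have hP : IsPGroup p (Subgroup.zpowers σ) := by
    intro g
    refine ⟨t, ?_⟩
    have hcoe : ((g : MulAut A)) ^ (p ^ t) = 1 := by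
      rcases Subgroup.mem_zpowers_iff.mp g.2 with ⟨k, hk⟩
      rw [← hk, ← zpow_natCast, ← zpow_mul, mul_comm, zpow_mul, zpow_natCast, hσpt, one_zpow]
    refine Subtype.ext ?_
    rw [SubmonoidClass.coe_pow]
    simpa using hcoe
  -- a nontrivial fixed point of σ
  have hone : (1 : A) ∈ MulAction.fixedPoints (Subgroup.zpowers σ) A := fun g => smul_one g
  haveI : Nonempty (MulAction.fixedPoints (Subgroup.zpowers σ) A) := ⟨⟨1, hone⟩⟩
  have hmod := hP.card_modEq_card_fixedPoints A
  have hcardA : p ∣ Nat.card A := by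
    obtain ⟨n, hn⟩ := IsPGroup.iff_card.mp hA
    have hn0 : n ≠ 0 := by
      rintro rfl
      rw [pow_zero] at hn
      exact (Finite.one_lt_card_iff_nontrivial.mpr inferInstance).ne' hn
    exact hn ▸ dvd_pow_self p hn0
  have hfixdvd : p ∣ Nat.card (MulAction.fixedPoints (Subgroup.zpowers σ) A) :=
    (Nat.modEq_zero_iff_dvd).mp (hmod.symm.trans (Nat.modEq_zero_iff_dvd.mpr hcardA))
  have hfixpos : 0 < Nat.card (MulAction.fixedPoints (Subgroup.zpowers σ) A) :=
    Nat.card_pos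
  haveI : Nontrivial (MulAction.fixedPoints (Subgroup.zpowers σ) A) := by
    rw [← Finite.one_lt_card_iff_nontrivial]
    have := Nat.le_of_dvd hfixpos hfixdvd
    have := hp.two_le
    omega
  obtain ⟨x, hx⟩ := exists_ne (⟨1, hone⟩ : MulAction.fixedPoints (Subgroup.zpowers σ) A)
  have hane : (x : A) ≠ 1 := fun h => hx (Subtype.ext h)
  have hσa : σ (x : A) = (x : A) := by
    have := x.2 ⟨σ, Subgroup.mem_zpowers σ⟩
    exact this
  -- the quotient of A by the coinvariants
  set ψ : A →* A := MonoidHom.mk' (fun a => σ a * a⁻¹) (by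
    intro a b
    show σ (a * b) * (a * b)⁻¹ = (σ a * a⁻¹) * (σ b * b⁻¹)
    rw [map_mul, mul_inv]
    exact mul_mul_mul_comm _ _ _ _) with hψ
  set M : Subgroup A := ψ.range with hM
  have hMne : M ≠ ⊤ := by
    intro htop
    have hsurj : Function.Surjective ψ := MonoidHom.range_eq_top.mp htop
    have hinj := Finite.injective_iff_surjective.mpr hsurj
    apply hane
    apply hinj
    show σ (x : A) * (x : A)⁻¹ = σ (1 : A) * (1 : A)⁻¹
    rw [hσa, mul_inv_cancel, map_one, one_mul, inv_one]
  haveI : Nontrivial (A ⧸ M) := by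
    obtain ⟨q, hq⟩ : ∃ q : A, q ∉ M := by
      by_contra hcon
      push_neg at hcon
      exact hMne ((Subgroup.eq_top_iff' M).mpr hcon)
    exact ⟨⟨(q : A ⧸ M), 1, fun h => hq ((QuotientGroup.eq_one_iff q).mp h)⟩⟩
  obtain ⟨π₀, hπ₀⟩ := aux_surj_zmod hp (A ⧸ M) (hA.to_quotient M)
  set π : A →* Multiplicative (ZMod p) := π₀.comp (QuotientGroup.mk' M) with hπdef
  have hπsurj : Function.Surjective π := hπ₀.comp (QuotientGroup.mk'_surjective M)
  have hπσ : ∀ a : A, π (σ a) = π a := by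
    intro a
    have hmk : (QuotientGroup.mk (σ a) : A ⧸ M) = QuotientGroup.mk a := by
      rw [QuotientGroup.eq]
      exact ⟨a⁻¹, by rw [hψ]; show σ a⁻¹ * (a⁻¹)⁻¹ = (σ a)⁻¹ * a; rw [map_inv, inv_inv]⟩
    show π₀ (QuotientGroup.mk' M (σ a)) = π₀ (QuotientGroup.mk' M a)
    have : (QuotientGroup.mk' M) (σ a) = (QuotientGroup.mk' M) a := hmk
    rw [this]
  have hπpow : ∀ (k : ℕ) (a : A), π ((σ ^ k) a) = π a := by
    intro k
    induction k with
    | zero => intro a; rfl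
    | succ n ih =>
      intro a
      have : (σ ^ (n + 1)) a = (σ ^ n) (σ a) := by
        rw [pow_succ]
        rfl
      rw [this, ih, hπσ]
  -- decomposition of elements of `ZMod (2*m)` into even and odd parts
  have hval : ∀ g : ZMod (2 * m), ((g.val : ℕ) : ZMod (2 * m)) = g := by
    intro g
    rw [ZMod.natCast_val, ZMod.cast_id]
  have hmm0 : (m : ZMod (2 * m)) + (m : ZMod (2 * m)) = 0 := by
    have h1 : ((2 * m : ℕ) : ZMod (2 * m)) = 0 := ZMod.natCast_self _
    push_cast at h1
    linear_combination h1
  have hdecomp : ∀ g : ZMod (2 * m), ∃ k : ℕ,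
      g = ((2 * k : ℕ) : ZMod (2 * m)) ∨
      g = ((2 * k : ℕ) : ZMod (2 * m)) + (m : ZMod (2 * m)) := by
    intro g
    rcases Nat.even_or_odd g.val with he | ho
    · refine ⟨g.val / 2, Or.inl ?_⟩
      obtain ⟨i, hi⟩ := he
      have h2 : (2 * (g.val / 2) : ℕ) = g.val := by omega
      rw [h2, hval g]
    · refine ⟨(g.val + m) / 2, Or.inr ?_⟩
      obtain ⟨j, hj⟩ := hoddm
      obtain ⟨i, hi⟩ := ho
      have h2 : 2 * ((g.val + m) / 2) = g.val + m := by omega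
      have h3 : ((2 * ((g.val + m) / 2) : ℕ) : ZMod (2 * m))
          = g + (m : ZMod (2 * m)) := by
        rw [h2]
        push_cast
        rw [hval]
      rw [h3, add_assoc, hmm0, add_zero]
  have hφ2k : ∀ k : ℕ, φ (Multiplicative.ofAdd ((2 * k : ℕ) : ZMod (2 * m))) = σ ^ k := by
    intro k
    have h1 : ((2 * k : ℕ) : ZMod (2 * m)) = k • (2 : ZMod (2 * m)) := by
      rw [nsmul_eq_mul]
      push_cast
      ring
    rw [h1, ofAdd_nsmul, map_pow]
  -- maps to the dihedral group
  set rHom : Multiplicative (ZMod p) →* DihedralGroup p :=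
    MonoidHom.mk' (fun x => DihedralGroup.r x.toAdd) (by
      intro x y
      show DihedralGroup.r (x * y).toAdd = DihedralGroup.r x.toAdd * DihedralGroup.r y.toAdd
      rw [DihedralGroup.r_mul_r, toAdd_mul]) with hrHom
  set f₁ : A →* DihedralGroup p := rHom.comp π with hf₁
  have h2 : ∀ a : ZMod 2, a ≠ 0 → a = 1 := by decide
  set d : Multiplicative (ZMod 2) →* DihedralGroup p :=
    MonoidHom.mk' (fun x => if x.toAdd = 0 then 1 else DihedralGroup.sr 0) (by
      intro x y
      show (if (x * y).toAdd = 0 then 1 else DihedralGroup.sr 0)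
          = (if x.toAdd = 0 then 1 else DihedralGroup.sr 0)
            * (if y.toAdd = 0 then 1 else DihedralGroup.sr 0)
      rw [toAdd_mul]
      by_cases hx : x.toAdd = 0 <;> by_cases hy : y.toAdd = 0
      · simp [hx, hy]
      · simp [hx, hy]
      · simp [hx, hy]
      · have h11 : x.toAdd + y.toAdd = 0 := by rw [h2 _ hx, h2 _ hy]; decide
        rw [if_pos h11, if_neg hx, if_neg hy, DihedralGroup.sr_mul_sr, sub_zero,
          DihedralGroup.one_def]) with hd
  set c : ZMod (2 * m) →+ ZMod 2 :=
    (ZMod.castHom (dvd_mul_right 2 m) (ZMod 2)).toAddMonoidHom with hc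
  set f₂ : Multiplicative (ZMod (2 * m)) →* DihedralGroup p :=
    d.comp (AddMonoidHom.toMultiplicative c) with hf₂
  have hf₂apply : ∀ x : ZMod (2 * m),
      f₂ (Multiplicative.ofAdd x) = if c x = 0 then 1 else DihedralGroup.sr 0 := by
    intro x
    rfl
  have hc2k : ∀ k : ℕ, c ((2 * k : ℕ) : ZMod (2 * m)) = 0 := by
    intro k
    show (ZMod.castHom (dvd_mul_right 2 m) (ZMod 2)) ((2 * k : ℕ) : ZMod (2 * m)) = 0
    rw [map_natCast]
    rw [ZMod.natCast_eq_zero_iff]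
    exact dvd_mul_right 2 k
  have hcm : c ((m : ℕ) : ZMod (2 * m)) = 1 := by
    show (ZMod.castHom (dvd_mul_right 2 m) (ZMod 2)) ((m : ℕ) : ZMod (2 * m)) = 1
    rw [map_natCast]
    obtain ⟨j, hj⟩ := hoddm
    rw [hj]
    push_cast
    rw [show ((2 : ZMod 2)) = 0 from rfl]
    ring
  -- even and odd values of f₂
  have hf₂even : ∀ k : ℕ, f₂ (Multiplicative.ofAdd ((2 * k : ℕ) : ZMod (2 * m))) = 1 := by
    intro k
    rw [hf₂apply, if_pos (hc2k k)]
  have hf₂odd : ∀ k : ℕ,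
      f₂ (Multiplicative.ofAdd (((2 * k : ℕ) : ZMod (2 * m)) + (m : ZMod (2 * m))))
        = DihedralGroup.sr 0 := by
    intro k
    rw [hf₂apply]
    rw [if_neg]
    rw [map_add, hc2k, hcm, zero_add]
    exact one_ne_zero
  -- the odd part of φ
  have hφodd : ∀ (k : ℕ) (a : A),
      φ (Multiplicative.ofAdd (((2 * k : ℕ) : ZMod (2 * m)) + (m : ZMod (2 * m)))) a
        = (σ ^ k) a⁻¹ := by
    intro k a
    rw [show Multiplicative.ofAdd (((2 * k : ℕ) : ZMod (2 * m)) + (m : ZMod (2 * m)))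
        = Multiplicative.ofAdd ((2 * k : ℕ) : ZMod (2 * m))
          * Multiplicative.ofAdd ((m : ℕ) : ZMod (2 * m)) from rfl]
    rw [map_mul, hφ2k, hφ]
    rfl
  -- compatibility for the lift
  have hcompat : ∀ g, f₁.comp (φ g).toMonoidHom
      = (MulAut.conj (f₂ g)).toMonoidHom.comp f₁ := by
    intro g
    ext a
    show f₁ (φ g a) = f₂ g * f₁ a * (f₂ g)⁻¹
    obtain ⟨k, hk | hk⟩ := hdecomp g.toAdd
    · have hg : g = Multiplicative.ofAdd ((2 * k : ℕ) : ZMod (2 * m)) := by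
        rw [← hk]
        rfl
      rw [hg, hf₂even, one_mul, inv_one, mul_one, hφ2k]
      show rHom (π ((σ ^ k) a)) = rHom (π a)
      rw [hπpow]
    · have hg : g = Multiplicative.ofAdd
          (((2 * k : ℕ) : ZMod (2 * m)) + (m : ZMod (2 * m))) := by
        rw [← hk]
        rfl
      have hsr_inv : (DihedralGroup.sr (0 : ZMod p))⁻¹ = DihedralGroup.sr 0 :=
        inv_eq_of_mul_eq_one_right (DihedralGroup.sr_mul_self 0)
      rw [hg, hf₂odd, hφodd]
      show rHom (π ((σ ^ k) a⁻¹)) = DihedralGroup.sr 0 * rHom (π a)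
        * (DihedralGroup.sr (0 : ZMod p))⁻¹
      rw [hπpow, map_inv, hsr_inv]
      show DihedralGroup.r (π a)⁻¹.toAdd
        = DihedralGroup.sr 0 * DihedralGroup.r (π a).toAdd * DihedralGroup.sr 0
      rw [DihedralGroup.sr_mul_r, DihedralGroup.sr_mul_sr, toAdd_inv]
      congr 1
      ring
  refine ⟨SemidirectProduct.lift f₁ f₂ hcompat, ?_⟩
  intro x
  cases x with
  | r i =>
    obtain ⟨a, ha⟩ := hπsurj (Multiplicative.ofAdd i)
    refine ⟨SemidirectProduct.inl a, ?_⟩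
    rw [SemidirectProduct.lift_inl]
    show DihedralGroup.r (π a).toAdd = DihedralGroup.r i
    rw [ha]
    rfl
  | sr i =>
    obtain ⟨a, ha⟩ := hπsurj (Multiplicative.ofAdd (-i))
    refine ⟨SemidirectProduct.inl a
      * SemidirectProduct.inr (Multiplicative.ofAdd ((m : ℕ) : ZMod (2 * m))), ?_⟩
    rw [map_mul, SemidirectProduct.lift_inl, SemidirectProduct.lift_inr]
    have : f₂ (Multiplicative.ofAdd ((m : ℕ) : ZMod (2 * m))) = DihedralGroup.sr 0 := by
      have := hf₂odd 0
      simpa using this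
    rw [this]
    show DihedralGroup.r (π a).toAdd * DihedralGroup.sr 0 = DihedralGroup.sr i
    rw [ha, DihedralGroup.r_mul_sr]
    congr 1
    show (0 : ZMod p) - (-i) = i
    ring
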